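/- Let $X$ be a compact subset of a normed real vector space $(E, \|\cdot\|)$ with at least two points, and let $Y \subseteq E$ be a convex set with $X \subseteq \overline{Y}$. Let $S \subseteq Y$ be a convex set dense in $Y$, let $\gamma : X \to \mathbb{R}$ be an upper semicontinuous bounded function, and let $\lambda > \frac{4 \sup_X |\gamma|}{\mathrm{diam}(X)}$. Then there exists $y^* \in S$ such that the function $x \mapsto \gamma(x) + \lambda \|x - y^*\|$ attains its maximum on $X$ at at least two distinct points. -/

import Mathlib

open Filter Topology

lemma usc_exists_max {α : Type*} [TopologicalSpace α] {f : α → ℝ} {s : Set α}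
    (hs : IsCompact s) (hne : s.Nonempty) (hf : UpperSemicontinuousOn f s) :
    ∃ a ∈ s, IsMaxOn f s a := by
  by_contra hcon
  push_neg at hcon
  have h : ∀ x ∈ s, ∃ w ∈ s, f x < f w := by
    intro x hx
    by_contra h'
    push_neg at h'
    exact hcon x hx (fun w hw => h' w hw)
  choose z hzs hfz using h
  have hmem : ∀ x (hx : x ∈ s), ∃ u, IsOpen u ∧ x ∈ u ∧ u ∩ s ⊆ {w | f w < f (z x hx)} := by
    intro x hx
    exact mem_nhdsWithin.mp (hf x hx (f (z x hx)) (hfz x hx))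
  choose u huo hxu hsub using hmem
  obtain ⟨t, hcover⟩ := hs.elim_nhds_subcover' u (fun x hx => (huo x hx).mem_nhds (hxu x hx))
  have htne : t.Nonempty := by
    rcases hne with ⟨x0, hx0⟩
    rcases Set.mem_iUnion₂.mp (hcover hx0) with ⟨i, hit, _⟩
    exact ⟨i, hit⟩
  obtain ⟨i0, hi0t, hi0max⟩ := t.exists_max_image (fun i => f (z i.1 i.2)) htne
  have hws : z i0.1 i0.2 ∈ s := hzs _ _
  rcases Set.mem_iUnion₂.mp (hcover hws) with ⟨j, hjt, hwu⟩
  have h1 : f (z i0.1 i0.2) < f (z j.1 j.2) := hsub j.1 j.2 ⟨hwu, hws⟩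
  have h2 := hi0max j hjt
  linarith

theorem stmt_8 {E : Type*} [NormedAddCommGroup E] [NormedSpace ℝ E]
    (X : Set E) (hXc : IsCompact X) (hX2 : ∃ a ∈ X, ∃ b ∈ X, a ≠ b)
    (Y : Set E) (hYconv : Convex ℝ Y) (hXY : X ⊆ closure Y)
    (S : Set E) (hSY : S ⊆ Y) (hSconv : Convex ℝ S) (hSdense : Y ⊆ closure S)
    (γ : E → ℝ) (hγusc : UpperSemicontinuousOn γ X) (hγb : ∃ M, ∀ x ∈ X, |γ x| ≤ M)
    (lam : ℝ) (hlam : lam > 4 * (⨆ x : X, |γ x|) / Metric.diam X) :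
    ∃ y ∈ S, ∃ a ∈ X, ∃ b ∈ X, a ≠ b ∧
      IsMaxOn (fun x => γ x + lam * ‖x - y‖) X a ∧
      IsMaxOn (fun x => γ x + lam * ‖x - y‖) X b := by
  obtain ⟨a0, ha0, b0, hb0, hab0⟩ := hX2
  obtain ⟨M0, hM0⟩ := hγb
  set M : ℝ := ⨆ x : X, |γ x| with hMdef
  set D : ℝ := Metric.diam X with hDdef
  have hXne : X.Nonempty := ⟨a0, ha0⟩
  have hbdd : BddAbove (Set.range fun x : X => |γ x|) := ⟨M0, by
    rintro v ⟨x, rfl⟩; exact hM0 x x.2⟩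
  have hMb : ∀ x ∈ X, |γ x| ≤ M := fun x hx => le_ciSup hbdd ⟨x, hx⟩
  have hM0' : (0:ℝ) ≤ M := le_trans (abs_nonneg _) (hMb a0 ha0)
  have hD : 0 < D := by
    have h1 : dist a0 b0 ≤ D := Metric.dist_le_diam_of_mem hXc.isBounded ha0 hb0
    have h2 : 0 < dist a0 b0 := dist_pos.mpr hab0
    linarith
  have hlam0 : 0 < lam :=
    lt_of_le_of_lt (div_nonneg (by linarith) hD.le) hlam
  have hlamD : 4 * M < lam * D := by
    have := (div_lt_iff₀ hD).mp hlam
    linarith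
  set r : ℝ := D / 2 - 2 * M / lam with hrdef
  have hr : 0 < r := by
    rw [hrdef]
    rw [sub_pos, div_lt_div_iff₀ hlam0 (by norm_num : (0:ℝ) < 2)]
    linarith
  -- the function and its sup
  set f : E → E → ℝ := fun x y => γ x + lam * ‖x - y‖ with hfdef
  have husc : ∀ y, UpperSemicontinuousOn (fun x => f x y) X := by
    intro y
    exact hγusc.add
      (Continuous.continuousOn (by continuity)).upperSemicontinuousOn
  have hmax : ∀ y : E, ∃ z ∈ X, IsMaxOn (fun x => f x y) X z :=
    fun y => usc_exists_max hXc hXne (husc y)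
  set F : E → ℝ := fun y => sSup ((fun x => f x y) '' X) with hFdef
  have hFeq : ∀ y z, z ∈ X → IsMaxOn (fun x => f x y) X z → F y = f z y := by
    intro y z hz hmz
    exact IsGreatest.csSup_eq ⟨⟨z, hz, rfl⟩, by
      rintro v ⟨w, hw, rfl⟩; exact hmz hw⟩
  have hFge : ∀ y, ∀ x ∈ X, f x y ≤ F y := by
    intro y x hx
    obtain ⟨z, hz, hmz⟩ := hmax y
    rw [hFeq y z hz hmz]
    exact hmz hx
  -- lower bound for F
  have hFlbM : ∀ y, -M ≤ F y := by
    intro y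
    have := hFge y a0 ha0
    have h1 : -M ≤ γ a0 := neg_le_of_abs_le (hMb a0 ha0)
    have h2 : 0 ≤ lam * ‖a0 - y‖ := by positivity
    simp only [hfdef] at this
    linarith
  have hFlb : ∀ y, lam * D / 2 - M ≤ F y := by
    intro y
    have hkey : D ≤ (2 * F y + 2 * M) / lam := by
      apply Metric.diam_le_of_forall_dist_le
      · have := hFlbM y
        apply div_nonneg (by linarith) hlam0.le
      · intro a ha b hb
        have h1 : lam * ‖a - y‖ ≤ F y + M := by
          have := hFge y a ha
          have h2 : -M ≤ γ a := neg_le_of_abs_le (hMb a ha)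
          simp only [hfdef] at this; linarith
        have h1' : lam * ‖b - y‖ ≤ F y + M := by
          have := hFge y b hb
          have h2 : -M ≤ γ b := neg_le_of_abs_le (hMb b hb)
          simp only [hfdef] at this; linarith
        have htri : ‖a - b‖ ≤ ‖a - y‖ + ‖b - y‖ := by
          have := norm_sub_le_norm_sub_add_norm_sub a y b
          linarith [norm_sub_rev y b]
        rw [dist_eq_norm, le_div_iff₀ hlam0]
        calc ‖a - b‖ * lam ≤ (‖a - y‖ + ‖b - y‖) * lam := by
              apply mul_le_mul_of_nonneg_right htri hlam0.le
          _ = lam * ‖a - y‖ + lam * ‖b - y‖ := by ring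
          _ ≤ 2 * F y + 2 * M := by linarith
    rw [le_div_iff₀ hlam0] at hkey
    nlinarith
  -- F is Lipschitz hence continuous
  have hFlip : ∀ y y', F y ≤ F y' + lam * ‖y - y'‖ := by
    intro y y'
    obtain ⟨z, hz, hmz⟩ := hmax y
    rw [hFeq y z hz hmz]
    have h1 : f z y ≤ f z y' + lam * ‖y - y'‖ := by
      simp only [hfdef]
      have : ‖z - y‖ ≤ ‖z - y'‖ + ‖y - y'‖ := by
        have := norm_sub_le_norm_sub_add_norm_sub z y' y
        linarith [norm_sub_rev y' y]
      nlinarith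
    exact le_trans h1 (by linarith [hFge y' z hz])
  have hFcont : Continuous F := by
    apply (LipschitzWith.of_dist_le_mul (K := lam.toNNReal) (f := F) ?_).continuous
    intro y y'
    rw [Real.dist_eq, Real.coe_toNNReal lam hlam0.le, dist_eq_norm]
    rw [abs_sub_le_iff]
    constructor
    · have := hFlip y y'; linarith
    · have := hFlip y' y; rw [norm_sub_rev]; linarith
  -- X ⊆ closure S
  have hXS : X ⊆ closure S := by
    intro x hx
    have h1 : closure Y ⊆ closure S := by
      rw [← closure_closure (s := S)]
      exact closure_mono hSdense
    exact h1 (hXY hx)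
  -- finite net of points of S
  set ε : ℝ := r / 2 with hεdef
  have hε : 0 < ε := by positivity
  have hnear : ∀ x ∈ X, ∃ p ∈ S, dist x p < ε := by
    intro x hx
    exact Metric.mem_closure_iff.mp (hXS hx) ε hε
  choose p hpS hpd using hnear
  obtain ⟨t, hcover⟩ := hXc.elim_nhds_subcover'
    (fun x hx => Metric.ball (p x hx) ε)
    (fun x hx => (Metric.isOpen_ball).mem_nhds (Metric.mem_ball.mpr (hpd x hx)))
  set C : Set E := (fun i : X => p i.1 i.2) '' ↑t with hCdef
  have hCS : C ⊆ S := by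
    rintro v ⟨i, _, rfl⟩; exact hpS i.1 i.2
  set K : Set E := convexHull ℝ C with hKdef
  have hKS : K ⊆ S := convexHull_min hCS hSconv
  have hKcpt : IsCompact K := (t.finite_toSet.image _).isCompact_convexHull (𝕜 := ℝ)
  have hKconv : Convex ℝ K := convex_convexHull ℝ C
  have hCK : C ⊆ K := subset_convexHull ℝ C
  have hKne : K.Nonempty := by
    rcases Set.mem_iUnion₂.mp (hcover ha0) with ⟨i, hit, _⟩
    exact ⟨p i.1 i.2, hCK ⟨i, hit, rfl⟩⟩
  -- minimize F on K
  obtain ⟨ys, hysK, hysmin⟩ := hKcpt.exists_isMinOn hKne hFcont.continuousOn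
  have hysS : ys ∈ S := hKS hysK
  -- maximizer at ys
  obtain ⟨xs, hxsX, hxsmax⟩ := hmax ys
  have hxsfar : r ≤ ‖xs - ys‖ := by
    have h1 : lam * D / 2 - M ≤ F ys := hFlb ys
    have h2 : F ys = γ xs + lam * ‖xs - ys‖ := hFeq ys xs hxsX hxsmax
    have h3 : γ xs ≤ M := le_of_abs_le (hMb xs hxsX)
    have h4 : lam * (D / 2 - 2 * M / lam) ≤ lam * ‖xs - ys‖ := by
      have hexp : lam * (D / 2 - 2 * M / lam) = lam * D / 2 - 2 * M := by
        field_simp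
      rw [hexp]; linarith
    have h5 := le_of_mul_le_mul_left h4 hlam0
    rw [hrdef]; exact h5
  -- net point near xs
  rcases Set.mem_iUnion₂.mp (hcover hxsX) with ⟨i, hit, hxball⟩
  set c : E := p i.1 i.2 with hcdef
  have hcK : c ∈ K := hCK ⟨i, hit, rfl⟩
  have hxsc : ‖xs - c‖ < ε := by
    have := Metric.mem_ball.mp hxball
    rwa [dist_eq_norm] at this
  -- the sequence
  set tn : ℕ → ℝ := fun n => 1 / (n + 1) with htndef
  have htn0 : ∀ n, 0 < tn n := fun n => by positivity
  have htn1 : ∀ n, tn n ≤ 1 := by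
    intro n
    rw [htndef]
    rw [div_le_one (by positivity)]
    linarith [Nat.cast_nonneg (α := ℝ) n]
  set yn : ℕ → E := fun n => (1 - tn n) • ys + tn n • c with hyndef
  have hynK : ∀ n, yn n ∈ K := by
    intro n
    exact hKconv hysK hcK (by linarith [htn1 n]) (htn0 n).le (by ring)
  have hyntend : Tendsto yn atTop (𝓝 ys) := by
    have h1 : Tendsto tn atTop (𝓝 0) := tendsto_one_div_add_atTop_nhds_zero_nat
    have h2 : Tendsto (fun n => (1 - tn n) • ys + tn n • c) atTop
        (𝓝 ((1 - (0:ℝ)) • ys + (0:ℝ) • c)) := by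
      exact (((tendsto_const_nhds.sub h1).smul_const ys).add (h1.smul_const c))
    simpa using h2
  -- maximizers along the sequence
  have hzn : ∀ n, ∃ z ∈ X, IsMaxOn (fun x => f x (yn n)) X z := fun n => hmax (yn n)
  choose z hzX hzmax using hzn
  -- key inequality per n
  have hA : ∀ n, ‖z n - ys‖ ≤ ‖z n - c‖ := by
    intro n
    have h1 : F ys ≤ F (yn n) := hysmin (hynK n)
    have h2 : F (yn n) = γ (z n) + lam * ‖z n - yn n‖ := hFeq _ _ (hzX n) (hzmax n)
    have h3 : γ (z n) + lam * ‖z n - ys‖ ≤ F ys := hFge ys (z n) (hzX n)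
    have h4 : ‖z n - ys‖ ≤ ‖z n - yn n‖ := by
      have h4' : lam * ‖z n - ys‖ ≤ lam * ‖z n - yn n‖ := by linarith
      exact le_of_mul_le_mul_left h4' hlam0
    have h5 : z n - yn n = (1 - tn n) • (z n - ys) + tn n • (z n - c) := by
      rw [hyndef]
      module
    have h6 : ‖z n - yn n‖ ≤ (1 - tn n) * ‖z n - ys‖ + tn n * ‖z n - c‖ := by
      rw [h5]
      refine le_trans (norm_add_le _ _) ?_
      rw [norm_smul, norm_smul, Real.norm_of_nonneg (by linarith [htn1 n]),
        Real.norm_of_nonneg (htn0 n).le]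
    have h7 : tn n * ‖z n - ys‖ ≤ tn n * ‖z n - c‖ := by nlinarith
    exact le_of_mul_le_mul_left h7 (htn0 n)
  -- subsequence converging
  obtain ⟨zb, hzbX, φ, hφ, hzφ⟩ := hXc.tendsto_subseq hzX
  have hyφ : Tendsto (fun n => yn (φ n)) atTop (𝓝 ys) :=
    hyntend.comp hφ.tendsto_atTop
  -- zb is a maximizer at ys
  have hzbmax : IsMaxOn (fun x => f x ys) X zb := by
    intro w hw
    simp only [Set.mem_setOf_eq]
    apply le_of_forall_pos_le_add
    intro η hη
    have husc' := hγusc zb hzbX (γ zb + η) (by linarith)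
    have htendW : Tendsto (fun n => z (φ n)) atTop (𝓝[X] zb) := by
      rw [tendsto_nhdsWithin_iff]
      exact ⟨hzφ, Filter.Eventually.of_forall (fun n => hzX (φ n))⟩
    have hev : ∀ᶠ n in atTop, γ (z (φ n)) < γ zb + η := htendW.eventually husc'
    have hineq : ∀ᶠ n in atTop,
        γ w + lam * ‖w - yn (φ n)‖ ≤ (γ zb + η) + lam * ‖z (φ n) - yn (φ n)‖ := by
      filter_upwards [hev] with n hn
      have := hzmax (φ n) hw
      simp only [Set.mem_setOf_eq, hfdef] at this
      have hnn : 0 ≤ lam * ‖z (φ n) - yn (φ n)‖ := by positivity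
      nlinarith
    have htL : Tendsto (fun n => γ w + lam * ‖w - yn (φ n)‖) atTop
        (𝓝 (γ w + lam * ‖w - ys‖)) := by
      apply Tendsto.const_add
      exact (Tendsto.const_mul _ ((tendsto_const_nhds.sub hyφ).norm))
    have htR : Tendsto (fun n => (γ zb + η) + lam * ‖z (φ n) - yn (φ n)‖) atTop
        (𝓝 ((γ zb + η) + lam * ‖zb - ys‖)) := by
      apply Tendsto.const_add
      exact (Tendsto.const_mul _ ((hzφ.sub hyφ).norm))
    have := le_of_tendsto_of_tendsto htL htR hineq
    simp only [hfdef]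
    linarith
  -- limit of hA
  have hAb : ‖zb - ys‖ ≤ ‖zb - c‖ := by
    apply le_of_tendsto_of_tendsto ((hzφ.sub tendsto_const_nhds).norm)
      ((hzφ.sub tendsto_const_nhds).norm)
    exact Filter.Eventually.of_forall (fun n => hA (φ n))
  -- zb ≠ xs
  have hne : xs ≠ zb := by
    intro hcontra
    rw [← hcontra] at hAb
    have : r ≤ ‖xs - c‖ := le_trans hxsfar hAb
    have : r < ε := lt_of_le_of_lt this hxsc
    rw [hεdef] at this
    linarith
  exact ⟨ys, hysS, xs, hxsX, zb, hzbX, hne, hxsmax, hzbmax⟩
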